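/- Let G be a commutative group, R a commutative ring, and ρ : G →* GL(n, R) a representation of G by invertible n × n matrices. On families X : G → Matrix n d R, define the Euclidean action (g ⊲ X) p = X (p * g) and the morphological action (g ⊳ X) p = ρ(g) * X (p * g); define the encoder h(X) p = ρ(p) * X p and the decoder l(X) p = (ρ p)⁻¹ * X p. Suppose z is a map on such families that is Euclidean-equivariant: z(g ⊲ X) = g ⊲ z(X) for all g, X. Then the network f = l ∘ z ∘ h is morphologically equivariant: f(g ⊳ X) = g ⊳ f(X) for all g ∈ G and all X. -/
import Mathlib

/-- The Euclidean action on families of node-feature matrices indexed by group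
elements: `(g ⊲ X) p = X (p * g)`. -/
def eucAct {G : Type*} [CommGroup G] {R n d : Type*}
    (g : G) (X : G → Matrix n d R) : G → Matrix n d R :=
  fun p => X (p * g)

/-- The morphological action: `(g ⊳ X) p = ρ g * X (p * g)`. -/
def morphAct {G : Type*} [CommGroup G] {R : Type*} [CommRing R]
    {n d : Type*} [Fintype n] [DecidableEq n]
    (ρ : G →* Matrix.GeneralLinearGroup n R) (g : G) (X : G → Matrix n d R) :
    G → Matrix n d R :=
  fun p => (ρ g : Matrix n n R) * X (p * g)

/-- The input encoder: `h(X) p = ρ p * X p`. -/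
def encoder {G : Type*} [CommGroup G] {R : Type*} [CommRing R]
    {n d : Type*} [Fintype n] [DecidableEq n]
    (ρ : G →* Matrix.GeneralLinearGroup n R) (X : G → Matrix n d R) :
    G → Matrix n d R :=
  fun p => (ρ p : Matrix n n R) * X p

/-- The output decoder: `l(X) p = (ρ p)⁻¹ * X p`. -/
def decoder {G : Type*} [CommGroup G] {R : Type*} [CommRing R]
    {n d : Type*} [Fintype n] [DecidableEq n]
    (ρ : G →* Matrix.GeneralLinearGroup n R) (X : G → Matrix n d R) :
    G → Matrix n d R :=
  fun p => (((ρ p)⁻¹ : Matrix.GeneralLinearGroup n R) : Matrix n n R) * X p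

/-- **Morphological-Symmetry-Equivariant network (paper's Theorem 2, concrete form).**
If `z` is Euclidean-equivariant, then `f = l ∘ z ∘ h` (decoder ∘ GNN ∘ encoder)
is morphologically equivariant: `f (g ⊳ X) = g ⊳ f X`. -/
theorem ms_hgnn_morphologically_equivariant
    {G : Type*} [CommGroup G] {R : Type*} [CommRing R]
    {n d : Type*} [Fintype n] [DecidableEq n]
    (ρ : G →* Matrix.GeneralLinearGroup n R)
    (z : (G → Matrix n d R) → (G → Matrix n d R))
    (hz : ∀ (g : G) (X : G → Matrix n d R), z (eucAct g X) = eucAct g (z X)) :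
    ∀ (g : G) (X : G → Matrix n d R),
      (decoder ρ ∘ z ∘ encoder ρ) (morphAct ρ g X)
        = morphAct ρ g ((decoder ρ ∘ z ∘ encoder ρ) X) := by
  intro g X
  have henc : encoder ρ (morphAct ρ g X) = eucAct g (encoder ρ X) := by
    funext p
    simp only [encoder, morphAct, eucAct, ← Matrix.mul_assoc]
    congr 1
    rw [← Matrix.GeneralLinearGroup.coe_mul, ← map_mul]
  simp only [Function.comp_apply, henc, hz]
  funext p
  simp only [decoder, morphAct, eucAct, ← Matrix.mul_assoc]
  congr 1
  have hkey : ρ g * (ρ (p * g))⁻¹ = (ρ p)⁻¹ := by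
    have h1 : g * (p * g)⁻¹ = p⁻¹ := by group
    rw [← map_inv, ← map_mul, h1, map_inv]
  rw [← Units.val_mul, hkey]
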